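/- Suppose additionally that sqrt(1/3 - (x - 1/2)^2) + sqrt(3)/2 <= y < sqrt(1 - (x - 1/2)^2) + 3*sqrt(3)/2 (region R3_4). Set A3 = 9 + 5*y^2 - (2x - 1)^2, B3 = ((x - 2)^2 + y^2) * ((x + 1)^2 + y^2), r = sqrt(A3 - sqrt(A3^2 - 16*B3)) / (8*sqrt(2)), and R = sqrt(16*r^2 - 1). Then the configuration p : Fin 4 -> R^2 given by p 0 = (0,0), p 1 = (1/2, R/2), p 2 = (0, R), p 3 = (1/2, 3R/2) is a packing of 4 equal circles of radius r on the flat torus R^2/Lambda; that is, ||p i - p j + lambda|| >= 2r for all i, j in Fin 4 and all lambda in Lambda with (i ≠ j or lambda ≠ 0). -/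

import Mathlib

noncomputable section

/-- The point `(a, b)` in the Euclidean plane. -/
def pt (a b : ℝ) : EuclideanSpace ℝ (Fin 2) :=
  (WithLp.equiv 2 (Fin 2 → ℝ)).symm ![a, b]

/-- The lattice generated by `v1 = (1,0)` and `v2 = (x,y)`. -/
def TLat (x y : ℝ) : Set (EuclideanSpace ℝ (Fin 2)) :=
  {v | ∃ m n : ℤ, v = (m : ℝ) • pt 1 0 + (n : ℝ) • pt x y}

/-- `p` is a packing of `k` equal circles of radius `r` on the flat torus `ℝ²/Λ(x,y)`. -/
def IsPacking (x y : ℝ) {k : ℕ} (r : ℝ) (p : Fin k → EuclideanSpace ℝ (Fin 2)) : Prop :=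
  ∀ i j : Fin k, ∀ l ∈ TLat x y, (i ≠ j ∨ l ≠ 0) → 2 * r ≤ ‖p i - p j + l‖

lemma pt_comb (a b c d xx yy m n : ℝ) :
    pt a b - pt c d + (m • pt 1 0 + n • pt xx yy) = pt (a - c + (m + n*xx)) (b - d + n*yy) := by
  ext i
  fin_cases i <;>
    simp [pt, WithLp.equiv_symm_apply, PiLp.toLp_apply, PiLp.sub_apply, PiLp.add_apply, PiLp.smul_apply]

lemma pt_norm_ge (u v r : ℝ) (hr : 0 ≤ r) (h : 4*r^2 ≤ u^2+v^2) : 2*r ≤ ‖pt u v‖ := by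
  have hn : ‖pt u v‖ = Real.sqrt (u^2 + v^2) := by
    rw [EuclideanSpace.norm_eq]
    congr 1
    simp [pt, Fin.sum_univ_two, Real.norm_eq_abs, sq_abs]
  rw [hn]
  rw [show (2*r) = Real.sqrt ((2*r)^2) from (Real.sqrt_sq (by linarith)).symm]
  exact Real.sqrt_le_sqrt (by nlinarith only [h])

lemma lat_ne (xx yy : ℝ) (m n : ℤ) (h : (m:ℝ) • pt 1 0 + (n:ℝ) • pt xx yy ≠ 0) :
    m ≠ 0 ∨ n ≠ 0 := by
  by_contra h'
  push_neg at h'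
  obtain ⟨rfl, rfl⟩ := h'
  simp at h

lemma int_sq (t : ℝ) (ht : |t| ≤ 1/2) (m : ℤ) : t^2 ≤ (t + m)^2 := by
  rcases abs_le.mp ht with ⟨h1, h2⟩
  rcases lt_trichotomy m 0 with h | h | h
  · have hm : (m:ℝ) ≤ -1 := by exact_mod_cast (by omega : m ≤ -1)
    nlinarith only [h1, h2, hm]
  · subst h; simp
  · have hm : (1:ℝ) ≤ m := by exact_mod_cast (by omega : 1 ≤ m)
    nlinarith only [h1, h2, hm]

set_option maxHeartbeats 1600000 in
theorem four_circles_packing_R3 (x y : ℝ) (hxy : 1 ≤ x ^ 2 + y ^ 2) (hy : 0 < y) (hx0 : 0 ≤ x) (hx1 : x ≤ 1 / 2)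
    (hreg1 : Real.sqrt (1 / 3 - (x - 1 / 2) ^ 2) + Real.sqrt 3 / 2 ≤ y) (hreg2 : y < Real.sqrt (1 - (x - 1 / 2) ^ 2) + 3 * Real.sqrt 3 / 2)
    (A3 B3 : ℝ) (hA3 : A3 = 9 + 5 * y ^ 2 - (2 * x - 1) ^ 2)
    (hB3 : B3 = ((x - 2) ^ 2 + y ^ 2) * ((x + 1) ^ 2 + y ^ 2))
    (r R : ℝ) (hr : r = Real.sqrt (A3 - Real.sqrt (A3 ^ 2 - 16 * B3)) / (8 * Real.sqrt 2))
    (hR : R = Real.sqrt (16 * r ^ 2 - 1))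
    : IsPacking x y r ![pt 0 0, pt (1 / 2) (R / 2), pt 0 R, pt (1 / 2) (3 * R / 2)] := by
  -- basic region facts
  have hs0 : (0:ℝ) ≤ Real.sqrt 3 := Real.sqrt_nonneg 3
  have hs2 : Real.sqrt 3 ^ 2 = 3 := Real.sq_sqrt (by norm_num)
  have hs32 : (3:ℝ)/2 ≤ Real.sqrt 3 := Real.le_sqrt_of_sq_le (by norm_num)
  have hv2 : (x - 1/2)^2 ≤ 1/4 := by
    nlinarith only [hx0, hx1, mul_nonneg hx0 (by linarith only [hx1] : (0:ℝ) ≤ 1/2 - x)]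
  have hsq112 : Real.sqrt 3 / 6 ≤ Real.sqrt (1/3 - (x-1/2)^2) :=
    Real.le_sqrt_of_sq_le (by nlinarith only [hs2, hv2])
  have hy23 : 2*Real.sqrt 3/3 ≤ y := by linarith only [hreg1, hsq112]
  have hy1 : 1 ≤ y := by linarith only [hy23, hs32]
  have hw43 : 4/3 ≤ y^2 := by
    have hp := mul_nonneg (by linarith only [hy23] : (0:ℝ) ≤ y - 2*Real.sqrt 3/3)
      (by linarith only [hy23, hy.le, hs0] : (0:ℝ) ≤ y + 2*Real.sqrt 3/3)
    nlinarith only [hp, hs2]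
  have hsy : Real.sqrt 3 * y ≤ y^2 + (x-1/2)^2 + 5/12 := by
    have h1 : Real.sqrt (1/3 - (x-1/2)^2) ≤ y - Real.sqrt 3/2 := by
      linarith only [hreg1]
    have h0 : (0:ℝ) ≤ 1/3 - (x-1/2)^2 := by linarith only [hv2]
    have h2 : 1/3 - (x-1/2)^2 ≤ (y - Real.sqrt 3/2)^2 := by
      calc 1/3 - (x-1/2)^2 = Real.sqrt (1/3 - (x-1/2)^2) ^ 2 := (Real.sq_sqrt h0).symm
        _ ≤ (y - Real.sqrt 3/2)^2 := pow_le_pow_left₀ (Real.sqrt_nonneg _) h1 2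
    have hexp : (y - Real.sqrt 3/2)^2 = y^2 - Real.sqrt 3 * y + 3/4 := by
      linear_combination (1/4 : ℝ) * hs2
    linarith only [h2, hexp]
  have hP1 : 3*y^2 ≤ (y^2 + (x-1/2)^2 + 5/12)^2 := by
    have h1 : (Real.sqrt 3 * y)^2 ≤ (y^2 + (x-1/2)^2 + 5/12)^2 :=
      pow_le_pow_left₀ (mul_nonneg hs0 hy.le) hsy 2
    calc 3*y^2 = (Real.sqrt 3 * y)^2 := by linear_combination (-(y^2)) * hs2
      _ ≤ _ := h1
  -- discriminant and S
  have hdisc : 0 ≤ A3^2 - 16*B3 := by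
    have hid : A3^2 - 16*B3 = 9*y^2*(y^2 + 2 - 8*(x-1/2)^2) := by rw [hA3, hB3]; ring
    rw [hid]
    have : (0:ℝ) ≤ y^2 + 2 - 8*(x-1/2)^2 := by linarith only [hw43, hv2]
    positivity
  set S := Real.sqrt (A3^2 - 16*B3) with hSdef
  have hS0 : 0 ≤ S := Real.sqrt_nonneg _
  have hS2 : S^2 = A3^2 - 16*B3 := Real.sq_sqrt hdisc
  have hB30 : 0 ≤ B3 := by rw [hB3]; positivity
  have hA3lb : 44/3 ≤ A3 := by rw [hA3]; linarith only [hw43, hv2]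
  have hSA : S ≤ A3 := by
    have h1 : S^2 ≤ A3^2 := by linarith only [hS2, hB30]
    exact le_of_pow_le_pow_left₀ two_ne_zero (by linarith only [hA3lb]) h1
  have hr128 : 128*r^2 = A3 - S := by
    have h2 : Real.sqrt 2 ^ 2 = 2 := Real.sq_sqrt (by norm_num)
    have h8 : (8*Real.sqrt 2)^2 = 128 := by linear_combination (64:ℝ) * h2
    rw [hr, div_pow, h8, Real.sq_sqrt (by linarith only [hSA] : (0:ℝ) ≤ A3 - S)]
    ring
  have hr0 : 0 ≤ r := by rw [hr]; positivity
  have hquart : 1024*r^4 - 16*A3*r^2 + B3 = 0 := by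
    have hSeq : S = A3 - 128*r^2 := by linarith only [hr128]
    rw [hSeq] at hS2
    linear_combination hS2 / 16
  -- 1 ≤ 12 r²
  have h12 : 1 ≤ 12*r^2 := by
    have hL3 : 12*A3 - 64 ≤ 9*B3 := by
      have hid : 9*B3 - (12*A3 - 64) = 9*((y^2+(x-1/2)^2+5/12)^2 - 3*y^2) := by
        rw [hA3, hB3]; ring
      linarith only [hid, hP1]
    have h1 : S^2 ≤ (A3 - 32/3)^2 := by linarith only [hS2, hL3]
    have h2 : S ≤ A3 - 32/3 :=
      le_of_pow_le_pow_left₀ two_ne_zero (by linarith only [hA3lb]) h1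
    linarith only [hr128, h2]
  have hR2 : R^2 = 16*r^2 - 1 := by
    rw [hR]; exact Real.sq_sqrt (by linarith only [h12, sq_nonneg r])
  have hR0 : 0 ≤ R := by rw [hR]; exact Real.sqrt_nonneg _
  -- 4 r² ≤ 1
  have h41 : 4*r^2 ≤ 1 := by
    rcases le_or_gt A3 32 with hc | hc
    · linarith only [hS0, hr128, hc]
    · have hw235 : 23/5 ≤ y^2 := by
        rw [hA3] at hc; linarith only [sq_nonneg (x-1/2), hc]
      have hq : (y^2+(x-1/2)^2+23/4)^2 ≤ 27*y^2 := by
        rcases le_or_gt y (3*Real.sqrt 3/2) with hy3 | hy3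
        · have h32 : (3*Real.sqrt 3/2)^2 = 27/4 := by linear_combination (9/4) * hs2
          have hw274 : y^2 ≤ 27/4 := by
            have hpw := pow_le_pow_left₀ hy.le hy3 2
            linarith only [hpw, h32]
          have ha : y^2+(x-1/2)^2+23/4 ≤ y^2+6 := by linarith only [hv2]
          have hb : (y^2+6)^2 ≤ 27*y^2 := by
            have hp := mul_nonneg (by linarith only [hw235] : (0:ℝ) ≤ y^2 - 3)
              (by linarith only [hw274] : (0:ℝ) ≤ 12 - y^2)
            nlinarith only [hp]
          calc (y^2+(x-1/2)^2+23/4)^2 ≤ (y^2+6)^2 :=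
              pow_le_pow_left₀ (by positivity) ha 2
            _ ≤ 27*y^2 := hb
        · have h1 : y - 3*Real.sqrt 3/2 < Real.sqrt (1 - (x-1/2)^2) := by
            linarith only [hreg2]
          have h0 : (0:ℝ) ≤ 1 - (x-1/2)^2 := by linarith only [hv2]
          have h2 : (y - 3*Real.sqrt 3/2)^2 ≤ 1 - (x-1/2)^2 := by
            calc (y - 3*Real.sqrt 3/2)^2 ≤ Real.sqrt (1 - (x-1/2)^2) ^ 2 :=
                pow_le_pow_left₀ (by linarith only [hy3]) h1.le 2
              _ = 1 - (x-1/2)^2 := Real.sq_sqrt h0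
          have hexp : (y - 3*Real.sqrt 3/2)^2 = y^2 - 3*(Real.sqrt 3*y) + 27/4 := by
            linear_combination (9/4) * hs2
          have h3 : y^2+(x-1/2)^2+23/4 ≤ 3*(Real.sqrt 3*y) := by
            linarith only [h2, hexp]
          have h27 : (3*(Real.sqrt 3*y))^2 = 27*y^2 := by
            linear_combination (9*y^2) * hs2
          calc (y^2+(x-1/2)^2+23/4)^2 ≤ (3*(Real.sqrt 3*y))^2 :=
              pow_le_pow_left₀ (by positivity) h3 2
            _ = 27*y^2 := h27
      have hL2 : B3 ≤ 4*A3 - 64 := by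
        have hid : 4*A3 - 64 - B3 = 27*y^2 - (y^2+(x-1/2)^2+23/4)^2 := by
          rw [hA3, hB3]; ring
        linarith only [hid, hq]
      have h1 : (A3-32)^2 ≤ S^2 := by linarith only [hS2, hL2]
      have h2 : A3 - 32 ≤ S := le_of_pow_le_pow_left₀ two_ne_zero hS0 h1
      linarith only [hr128, h2]
  -- 3R ≤ 2y
  have hRy : 3*R ≤ 2*y := by
    have h144 : 144*r^2 ≤ 4*y^2 + 9 := by
      have hL4 : 16*B3 ≤ ((32*y^2+72)/9) * (2*A3 - (32*y^2+72)/9) := by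
        have hid : ((32*y^2+72)/9)*(2*A3 - (32*y^2+72)/9) - 16*B3 =
            (560*(y^2)^2 + 1224*(y^2*(1-4*(x-1/2)^2)) - 81*(1-4*(x-1/2)^2)^2)/81 := by
          rw [hA3, hB3]; ring
        have hz0 : (0:ℝ) ≤ 1-4*(x-1/2)^2 := by linarith only [hv2]
        have hp1 := mul_nonneg (sq_nonneg y) hz0
        have hp2 := mul_nonneg (by linarith only [hw43] : (0:ℝ) ≤ y^2 - 4/3) (sq_nonneg y)
        have hp3 := mul_nonneg hz0 (by linarith only [hv2, sq_nonneg (x-1/2)] :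
          (0:ℝ) ≤ 1-(1-4*(x-1/2)^2))
        linarith only [hid, hp1, hp2, hp3, hw43, sq_nonneg (x-1/2)]
      rcases le_or_gt A3 ((32*y^2+72)/9) with hc | hc
      · linarith only [hS0, hr128, hc]
      · have h1 : (A3 - (32*y^2+72)/9)^2 ≤ S^2 := by linarith only [hS2, hL4]
        have h2 : A3 - (32*y^2+72)/9 ≤ S := le_of_pow_le_pow_left₀ two_ne_zero hS0 h1
        linarith only [hr128, h2]
    have h1 : (3*R)^2 ≤ (2*y)^2 := by linarith only [hR2, h144]
    exact le_of_pow_le_pow_left₀ two_ne_zero (by linarith only [hy.le]) h1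
  -- the key equality
  have hyR : 3*y*R = (x-1/2)^2 + y^2 + 32*r^2 - 9/4 := by
    have hDpos : 0 < (x-1/2)^2 + y^2 + 32*r^2 - 9/4 := by
      linarith only [sq_nonneg (x-1/2), hw43, h12]
    have hid : ((x-1/2)^2 + y^2 + 32*r^2 - 9/4)^2 - 9*y^2*(16*r^2-1) =
        1024*r^4 - 16*A3*r^2 + B3 := by rw [hA3, hB3]; ring
    have hy2R2 : y^2*R^2 = y^2*(16*r^2-1) := by rw [hR2]
    have hDsq : ((x-1/2)^2 + y^2 + 32*r^2 - 9/4)^2 = (3*y*R)^2 := by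
      linear_combination hid + hquart - 9 * hy2R2
    have h0 : (((x-1/2)^2 + y^2 + 32*r^2 - 9/4) - 3*y*R) *
        (((x-1/2)^2 + y^2 + 32*r^2 - 9/4) + 3*y*R) = 0 := by linear_combination hDsq
    rcases mul_eq_zero.mp h0 with h | h
    · linarith only [h]
    · have hp := mul_nonneg hy.le hR0
      linarith only [h, hDpos, hp]
  have hD : (x-1/2)^2 + (y-3*R/2)^2 = 4*r^2 := by
    linear_combination (9/4) * hR2 - hyR
  -- F6
  have hF6 : 4*r^2 ≤ x^2 + (y-R)^2 := by
    have h112 : 112*r^2 ≤ 12*x + 4*(x-1/2)^2 + 4*y^2 + 3 := by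
      have hL5 : 16*B3 ≤ (32*((x+1)^2+y^2)/7) * (2*A3 - 32*((x+1)^2+y^2)/7) := by
        have hid : (32*((x+1)^2+y^2)/7) * (2*A3 - 32*((x+1)^2+y^2)/7) - 16*B3 =
            (144*((x+1)^2+y^2)/49)*(3*y^2-(5*x-2)^2) := by rw [hA3, hB3]; ring
        have h1 : 0 ≤ 3*y^2 - (5*x-2)^2 := by
          linarith only [mul_nonneg hx0 (by linarith only [hx1] : (0:ℝ) ≤ 4 - 5*x), hw43]
        linarith only [hid,
          mul_nonneg (by positivity : (0:ℝ) ≤ 144*((x+1)^2+y^2)/49) h1]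
      rcases le_or_gt A3 (32*((x+1)^2+y^2)/7) with hc | hc
      · linarith only [hS0, hr128, hc]
      · have h1 : (A3 - 32*((x+1)^2+y^2)/7)^2 ≤ S^2 := by linarith only [hS2, hL5]
        have h2 : A3 - 32*((x+1)^2+y^2)/7 ≤ S :=
          le_of_pow_le_pow_left₀ two_ne_zero hS0 h1
        linarith only [hr128, h2]
    linarith only [h112, hyR, hR2]
  -- the key inequality for lattice vectors
  clear hreg1 hreg2 hxy hsy hP1 hsq112 hy23 hs0 hs2 hs32
  have key : ∀ k m n : ℤ, -3 ≤ k → k ≤ 3 → (k ≠ 0 ∨ m ≠ 0 ∨ n ≠ 0) →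
      4*r^2 ≤ ((k:ℝ)/2 + (m:ℝ) + (n:ℝ)*x)^2 + ((k:ℝ)*R/2 + (n:ℝ)*y)^2 := by
    have htx : |x - 1/2| ≤ 1/2 := by
      rw [abs_le]; constructor <;> linarith only [hx0, hx1]
    have htx0 : |x| ≤ 1/2 := by
      rw [abs_le]; constructor <;> linarith only [hx0, hx1]
    have hhalf : |(1:ℝ)/2| ≤ 1/2 := by rw [abs_le]; norm_num
    have hmhalf : |(-1:ℝ)/2| ≤ 1/2 := by rw [abs_le]; norm_num
    have main : ∀ k m n : ℤ, -3 ≤ k → k ≤ 3 → 1 ≤ n →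
        4*r^2 ≤ ((k:ℝ)/2 + (m:ℝ) + (n:ℝ)*x)^2 + ((k:ℝ)*R/2 + (n:ℝ)*y)^2 := by
      intro k m n hk1 hk2 hn
      rcases eq_or_lt_of_le hn with hn1 | hn2
      · -- n = 1
        subst hn1
        push_cast
        interval_cases k
        · -- k = -3 : tight via hD
          have h := int_sq (x - 1/2) htx (m - 1)
          push_cast at h
          linarith only [h, hD]
        · -- k = -2 : via hF6
          have h := int_sq x htx0 (m - 1)
          push_cast at h
          linarith only [h, hF6]
        · -- k = -1
          have h := int_sq (x - 1/2) htx m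
          push_cast at h
          linarith only [h, hD,
            mul_nonneg hR0 (by linarith only [hRy, hR0] : (0:ℝ) ≤ y - R)]
        · -- k = 0
          linarith only [hw43, h41, sq_nonneg ((m:ℝ) + x)]
        · -- k = 1
          linarith only [hw43, h41, sq_nonneg (1/2 + (m:ℝ) + x),
            mul_nonneg hy.le hR0, sq_nonneg R]
        · -- k = 2
          linarith only [hw43, h41, sq_nonneg (2/2 + (m:ℝ) + x),
            mul_nonneg hy.le hR0, sq_nonneg R]
        · -- k = 3
          linarith only [hw43, h41, sq_nonneg (3/2 + (m:ℝ) + x),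
            mul_nonneg hy.le hR0, sq_nonneg R]
      · -- n ≥ 2
        have hn2' : (2:ℝ) ≤ (n:ℝ) := by exact_mod_cast (by omega : (2:ℤ) ≤ n)
        have hk1' : (-3:ℝ) ≤ (k:ℝ) := by exact_mod_cast hk1
        have hp1 := mul_nonneg (by linarith only [hn2'] : (0:ℝ) ≤ (n:ℝ)-2) hy.le
        have hp2 := mul_nonneg (by linarith only [hk1'] : (0:ℝ) ≤ (k:ℝ)+3) hR0
        have hv1 : 1 ≤ (k:ℝ)*R/2 + (n:ℝ)*y := by
          linarith only [hp1, hp2, hRy, hy1]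
        nlinarith only [hv1, sq_nonneg ((k:ℝ)/2 + (m:ℝ) + (n:ℝ)*x), h41]
    intro k m n hk1 hk2 hne
    rcases lt_trichotomy n 0 with hn | hn | hn
    · have h := main (-k) (-m) (-n) (by omega) (by omega) (by omega)
      push_cast at h ⊢
      linarith only [h]
    · -- n = 0
      subst hn
      push_cast
      interval_cases k
      · -- k = -3
        linarith only [hR2, h12, sq_nonneg (-3/2 + (m:ℝ))]
      · -- k = -2
        linarith only [hR2, h12, sq_nonneg (-2/2 + (m:ℝ))]
      · -- k = -1
        have h := int_sq (-1/2 : ℝ) hmhalf m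
        push_cast at h
        linarith only [h, hR2]
      · -- k = 0
        have hm : m ≠ 0 := by rcases hne with h | h | h <;> omega
        have h1 : (1:ℝ) ≤ |(m:ℝ)| := by
          rw [← Int.cast_abs]
          exact_mod_cast Int.one_le_abs hm
        nlinarith only [h41, sq_abs ((m:ℝ)), h1, abs_nonneg ((m:ℝ))]
      · -- k = 1
        have h := int_sq (1/2 : ℝ) hhalf m
        push_cast at h
        linarith only [h, hR2]
      · -- k = 2
        linarith only [hR2, h12, sq_nonneg (2/2 + (m:ℝ))]
      · -- k = 3
        linarith only [hR2, h12, sq_nonneg (3/2 + (m:ℝ))]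
    · exact main k m n hk1 hk2 (by omega)
  -- conclude
  intro i j l hl hne
  obtain ⟨m, n, rfl⟩ := hl
  fin_cases i <;> fin_cases j
  · -- (0,0)
    show 2 * r ≤ ‖pt 0 0 - pt 0 0 + ((m:ℝ) • pt 1 0 + (n:ℝ) • pt x y)‖
    rw [pt_comb]
    refine pt_norm_ge _ _ r hr0 ?_
    have h := key (0) m n (by omega) (by omega) (Or.inr (lat_ne x y m n (by simpa using hne)))
    push_cast at h
    linarith only [h]
  · -- (0,1)
    show 2 * r ≤ ‖pt 0 0 - pt (1/2) (R/2) + ((m:ℝ) • pt 1 0 + (n:ℝ) • pt x y)‖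
    rw [pt_comb]
    refine pt_norm_ge _ _ r hr0 ?_
    have h := key (-1) m n (by omega) (by omega) (Or.inl (by decide))
    push_cast at h
    linarith only [h]
  · -- (0,2)
    show 2 * r ≤ ‖pt 0 0 - pt 0 R + ((m:ℝ) • pt 1 0 + (n:ℝ) • pt x y)‖
    rw [pt_comb]
    refine pt_norm_ge _ _ r hr0 ?_
    have h := key (-2) (m+1) n (by omega) (by omega) (Or.inl (by decide))
    push_cast at h
    linarith only [h]
  · -- (0,3)
    show 2 * r ≤ ‖pt 0 0 - pt (1/2) (3*R/2) + ((m:ℝ) • pt 1 0 + (n:ℝ) • pt x y)‖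
    rw [pt_comb]
    refine pt_norm_ge _ _ r hr0 ?_
    have h := key (-3) (m+1) n (by omega) (by omega) (Or.inl (by decide))
    push_cast at h
    linarith only [h]
  · -- (1,0)
    show 2 * r ≤ ‖pt (1/2) (R/2) - pt 0 0 + ((m:ℝ) • pt 1 0 + (n:ℝ) • pt x y)‖
    rw [pt_comb]
    refine pt_norm_ge _ _ r hr0 ?_
    have h := key (1) m n (by omega) (by omega) (Or.inl (by decide))
    push_cast at h
    linarith only [h]
  · -- (1,1)
    show 2 * r ≤ ‖pt (1/2) (R/2) - pt (1/2) (R/2) + ((m:ℝ) • pt 1 0 + (n:ℝ) • pt x y)‖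
    rw [pt_comb]
    refine pt_norm_ge _ _ r hr0 ?_
    have h := key (0) m n (by omega) (by omega) (Or.inr (lat_ne x y m n (by simpa using hne)))
    push_cast at h
    linarith only [h]
  · -- (1,2)
    show 2 * r ≤ ‖pt (1/2) (R/2) - pt 0 R + ((m:ℝ) • pt 1 0 + (n:ℝ) • pt x y)‖
    rw [pt_comb]
    refine pt_norm_ge _ _ r hr0 ?_
    have h := key (-1) (m+1) n (by omega) (by omega) (Or.inl (by decide))
    push_cast at h
    linarith only [h]
  · -- (1,3)
    show 2 * r ≤ ‖pt (1/2) (R/2) - pt (1/2) (3*R/2) + ((m:ℝ) • pt 1 0 + (n:ℝ) • pt x y)‖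
    rw [pt_comb]
    refine pt_norm_ge _ _ r hr0 ?_
    have h := key (-2) (m+1) n (by omega) (by omega) (Or.inl (by decide))
    push_cast at h
    linarith only [h]
  · -- (2,0)
    show 2 * r ≤ ‖pt 0 R - pt 0 0 + ((m:ℝ) • pt 1 0 + (n:ℝ) • pt x y)‖
    rw [pt_comb]
    refine pt_norm_ge _ _ r hr0 ?_
    have h := key (2) (m-1) n (by omega) (by omega) (Or.inl (by decide))
    push_cast at h
    linarith only [h]
  · -- (2,1)
    show 2 * r ≤ ‖pt 0 R - pt (1/2) (R/2) + ((m:ℝ) • pt 1 0 + (n:ℝ) • pt x y)‖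
    rw [pt_comb]
    refine pt_norm_ge _ _ r hr0 ?_
    have h := key (1) (m-1) n (by omega) (by omega) (Or.inl (by decide))
    push_cast at h
    linarith only [h]
  · -- (2,2)
    show 2 * r ≤ ‖pt 0 R - pt 0 R + ((m:ℝ) • pt 1 0 + (n:ℝ) • pt x y)‖
    rw [pt_comb]
    refine pt_norm_ge _ _ r hr0 ?_
    have h := key (0) m n (by omega) (by omega) (Or.inr (lat_ne x y m n (by simpa using hne)))
    push_cast at h
    linarith only [h]
  · -- (2,3)
    show 2 * r ≤ ‖pt 0 R - pt (1/2) (3*R/2) + ((m:ℝ) • pt 1 0 + (n:ℝ) • pt x y)‖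
    rw [pt_comb]
    refine pt_norm_ge _ _ r hr0 ?_
    have h := key (-1) m n (by omega) (by omega) (Or.inl (by decide))
    push_cast at h
    linarith only [h]
  · -- (3,0)
    show 2 * r ≤ ‖pt (1/2) (3*R/2) - pt 0 0 + ((m:ℝ) • pt 1 0 + (n:ℝ) • pt x y)‖
    rw [pt_comb]
    refine pt_norm_ge _ _ r hr0 ?_
    have h := key (3) (m-1) n (by omega) (by omega) (Or.inl (by decide))
    push_cast at h
    linarith only [h]
  · -- (3,1)
    show 2 * r ≤ ‖pt (1/2) (3*R/2) - pt (1/2) (R/2) + ((m:ℝ) • pt 1 0 + (n:ℝ) • pt x y)‖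
    rw [pt_comb]
    refine pt_norm_ge _ _ r hr0 ?_
    have h := key (2) (m-1) n (by omega) (by omega) (Or.inl (by decide))
    push_cast at h
    linarith only [h]
  · -- (3,2)
    show 2 * r ≤ ‖pt (1/2) (3*R/2) - pt 0 R + ((m:ℝ) • pt 1 0 + (n:ℝ) • pt x y)‖
    rw [pt_comb]
    refine pt_norm_ge _ _ r hr0 ?_
    have h := key (1) m n (by omega) (by omega) (Or.inl (by decide))
    push_cast at h
    linarith only [h]
  · -- (3,3)
    show 2 * r ≤ ‖pt (1/2) (3*R/2) - pt (1/2) (3*R/2) + ((m:ℝ) • pt 1 0 + (n:ℝ) • pt x y)‖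
    rw [pt_comb]
    refine pt_norm_ge _ _ r hr0 ?_
    have h := key (0) m n (by omega) (by omega) (Or.inr (lat_ne x y m n (by simpa using hne)))
    push_cast at h
    linarith only [h]
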